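/- There exist orientation-preserving homeomorphisms f and g of [0,1] with f ∘ g = g ∘ f, and points z, x ∈ (0,1), such that for the group G generated by f and g: (i) the G-orbit of z equals {gⁿ(z) : n ∈ ℤ} and its set of accumulation points is exactly {0, 1}; (ii) the G-orbit of x is disjoint from the G-orbit of z and its set of accumulation points is exactly O(z) ∪ {0, 1}, the closure of the G-orbit of z. -/

import Mathlib

open Set Topology Filter

/-- Orientation-preserving homeomorphisms of `[0,1]`, i.e. increasing homeomorphisms of
`[0,1]` onto itself, are exactly the order isomorphisms of the unit interval
(an increasing bijection of `[0,1]` is automatically a homeomorphism). -/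
abbrev IntervalHomeo := unitInterval ≃o unitInterval

/-- The `G`-orbit of a point `x`. -/
def orbit (G : Subgroup IntervalHomeo) (x : unitInterval) : Set unitInterval :=
  {y | ∃ g ∈ G, g x = y}

/-- A set `M` is `G`-invariant if `g(M) = M` for every `g ∈ G`. -/
def Invariant (G : Subgroup IntervalHomeo) (M : Set unitInterval) : Prop :=
  ∀ g ∈ G, ⇑(g : IntervalHomeo) '' M = M

/-- The open interval `(0,1)` inside `[0,1]`. -/
def openI : Set unitInterval := {x | (x : ℝ) ∈ Set.Ioo (0 : ℝ) 1}

/-- `M` is contained in `S` and closed in the subspace topology of `S`. -/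
def ClosedIn (S M : Set unitInterval) : Prop := M ⊆ S ∧ closure M ∩ S ⊆ M

section Aux
open Real

noncomputable def qf : ℝ → ℝ := fun t => Real.arctan t / π + 1/2

lemma pi_pos' : (0:ℝ) < π := Real.pi_pos

lemma qf_mem (t : ℝ) : qf t ∈ Ioo (0:ℝ) 1 := by
  have h := Real.arctan_mem_Ioo t
  have hπ : (0:ℝ) < π := Real.pi_pos
  have h1 : (-(π/2))/π < Real.arctan t / π := (div_lt_div_iff_of_pos_right hπ).mpr h.1
  have h2 : Real.arctan t / π < (π/2)/π := (div_lt_div_iff_of_pos_right hπ).mpr h.2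
  have e1 : (-(π/2))/π = -(1/2) := by field_simp
  have e2 : (π/2)/π = 1/2 := by field_simp
  rw [e1] at h1; rw [e2] at h2
  constructor <;> simp only [qf] <;> linarith

lemma qf_strictMono : StrictMono qf := by
  intro a b hab
  have := Real.arctan_strictMono hab
  have hπ : (0:ℝ) < π := Real.pi_pos
  simp only [qf]
  have := (div_lt_div_iff_of_pos_right hπ).mpr this
  linarith

lemma qf_surj : ∀ s ∈ Ioo (0:ℝ) 1, ∃ t, qf t = s := by
  intro s hs
  have hπ : (0:ℝ) < π := Real.pi_pos
  refine ⟨Real.tan ((s - 1/2) * π), ?_⟩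
  have hmem : (s - 1/2) * π ∈ Ioo (-(π/2)) (π/2) := by
    constructor <;> nlinarith [hs.1, hs.2]
  have : Real.arctan (Real.tan ((s - 1/2)*π)) = (s - 1/2)*π :=
    Real.arctan_tan hmem.1 hmem.2
  simp only [qf, this]
  field_simp
  ring

lemma qf_tendsto_atTop : Tendsto qf atTop (nhds 1) := by
  have h := tendsto_nhds_of_tendsto_nhdsWithin Real.tendsto_arctan_atTop
  have hπ : (0:ℝ) ≠ π := ne_of_lt Real.pi_pos
  have : Tendsto (fun t => Real.arctan t / π + 1/2) atTop (nhds ((π/2)/π + 1/2)) :=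
    ((h.div_const π).add_const (1/2))
  convert this using 2
  · rfl
  field_simp <;> ring

lemma qf_tendsto_atBot : Tendsto qf atBot (nhds 0) := by
  have h := tendsto_nhds_of_tendsto_nhdsWithin Real.tendsto_arctan_atBot
  have : Tendsto (fun t => Real.arctan t / π + 1/2) atBot (nhds ((-(π/2))/π + 1/2)) :=
    ((h.div_const π).add_const (1/2))
  convert this using 2
  · rfl
  have hπ : (0:ℝ) < π := Real.pi_pos
  field_simp <;> ring

noncomputable def Q : ℝ ≃o Ioo (0:ℝ) 1 :=
  StrictMono.orderIsoOfSurjective (fun t => ⟨qf t, qf_mem t⟩)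
    (fun a b hab => by simpa [Subtype.mk_lt_mk] using qf_strictMono hab)
    (fun ⟨s, hs⟩ => by obtain ⟨t, ht⟩ := qf_surj s hs; exact ⟨t, by simp [ht]⟩)

@[simp] lemma Q_val (t : ℝ) : (Q t : ℝ) = qf t := rfl

noncomputable def Qh : ℝ ≃ₜ Ioo (0:ℝ) 1 := Q.toHomeomorph

lemma qf_isOpenEmbedding : IsOpenEmbedding qf := by
  have h1 : IsOpenEmbedding (Subtype.val : Ioo (0:ℝ) 1 → ℝ) :=
    (isOpen_Ioo : IsOpen (Ioo (0:ℝ) 1)).isOpenEmbedding_subtypeVal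
  have h2 : IsOpenEmbedding (Qh : ℝ → Ioo (0:ℝ) 1) := Qh.isOpenEmbedding
  have : qf = Subtype.val ∘ (Qh : ℝ → Ioo (0:ℝ) 1) := rfl
  rw [this]
  exact h1.comp h2

-- ι : ℝ → unitInterval
noncomputable def ii : ℝ → unitInterval := fun t => ⟨qf t, Ioo_subset_Icc_self (qf_mem t)⟩

lemma ii_val (t : ℝ) : (ii t : ℝ) = qf t := rfl

lemma ii_injective : Function.Injective ii := fun a b h => by
  have : qf a = qf b := congrArg Subtype.val h
  exact qf_strictMono.injective this

lemma ii_strictMono : StrictMono ii := fun a b h => by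
  simpa [ii, Subtype.mk_lt_mk] using qf_strictMono h

lemma ii_isEmbedding : Topology.IsEmbedding ii := by
  have hval : Topology.IsEmbedding (Subtype.val : unitInterval → ℝ) := Topology.IsEmbedding.subtypeVal
  have hcomp : (Subtype.val : unitInterval → ℝ) ∘ ii = qf := rfl
  have hcont : Continuous ii := by
    apply Continuous.subtype_mk
    exact qf_isOpenEmbedding.continuous
  exact Topology.IsEmbedding.of_comp hcont continuous_subtype_val (hcomp ▸ qf_isOpenEmbedding.isEmbedding)

lemma unitInterval_cases (x : unitInterval) : x = 0 ∨ x = 1 ∨ ∃ t, ii t = x := by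
  rcases eq_or_lt_of_le x.2.1 with h0 | h0
  · left; exact Subtype.ext h0.symm
  rcases eq_or_lt_of_le x.2.2 with h1 | h1
  · right; left; exact Subtype.ext h1
  · right; right
    obtain ⟨t, ht⟩ := qf_surj x ⟨h0, h1⟩
    exact ⟨t, Subtype.ext ht⟩

lemma ii_ne_zero (t : ℝ) : ii t ≠ 0 := fun h => by
  have : qf t = 0 := congrArg Subtype.val h
  exact absurd this (ne_of_gt (qf_mem t).1)

lemma ii_ne_one (t : ℝ) : ii t ≠ 1 := fun h => by
  have : qf t = 1 := congrArg Subtype.val h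
  exact absurd this (ne_of_lt (qf_mem t).2)

-- extension of an order iso of ℝ to an order iso of [0,1]
noncomputable def extFun (φ : ℝ ≃o ℝ) : unitInterval → unitInterval := fun x =>
  if h : (x:ℝ) ∈ Ioo (0:ℝ) 1 then ii (φ (Q.symm ⟨x, h⟩)) else x

lemma extFun_ii (φ : ℝ ≃o ℝ) (t : ℝ) : extFun φ (ii t) = ii (φ t) := by
  have h : ((ii t : ℝ)) ∈ Ioo (0:ℝ) 1 := qf_mem t
  have hQ : Q.symm ⟨(ii t : ℝ), h⟩ = t := by
    have : (⟨(ii t : ℝ), h⟩ : Ioo (0:ℝ) 1) = Q t := rfl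
    rw [this, OrderIso.symm_apply_apply]
  simp only [extFun, dif_pos h, hQ]

lemma extFun_zero (φ : ℝ ≃o ℝ) : extFun φ 0 = 0 := by
  simp [extFun, mem_Ioo]

lemma extFun_one (φ : ℝ ≃o ℝ) : extFun φ 1 = 1 := by
  simp [extFun, mem_Ioo]

lemma extFun_strictMono (φ : ℝ ≃o ℝ) : StrictMono (extFun φ) := by
  intro x y hxy
  rcases unitInterval_cases x with rfl | rfl | ⟨t, rfl⟩
  · rw [extFun_zero]
    rcases unitInterval_cases y with rfl | rfl | ⟨s, rfl⟩
    · exact absurd hxy (lt_irrefl _)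
    · rw [extFun_one]; exact hxy
    · rw [extFun_ii]
      exact lt_of_le_of_ne (unitInterval.nonneg') (Ne.symm (ii_ne_zero _))
  · exact absurd hxy (not_lt.mpr unitInterval.le_one')
  · rcases unitInterval_cases y with rfl | rfl | ⟨s, rfl⟩
    · exact absurd hxy (not_lt.mpr unitInterval.nonneg')
    · rw [extFun_ii, extFun_one]
      exact lt_of_le_of_ne (unitInterval.le_one') (ii_ne_one _)
    · rw [extFun_ii, extFun_ii]
      exact ii_strictMono (φ.strictMono (ii_strictMono.lt_iff_lt.mp hxy))

lemma extFun_surjective (φ : ℝ ≃o ℝ) : Function.Surjective (extFun φ) := by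
  intro y
  rcases unitInterval_cases y with rfl | rfl | ⟨s, rfl⟩
  · exact ⟨0, extFun_zero φ⟩
  · exact ⟨1, extFun_one φ⟩
  · exact ⟨ii (φ.symm s), by rw [extFun_ii, OrderIso.apply_symm_apply]⟩

noncomputable def extIso (φ : ℝ ≃o ℝ) : unitInterval ≃o unitInterval :=
  StrictMono.orderIsoOfSurjective (extFun φ) (extFun_strictMono φ) (extFun_surjective φ)

lemma extIso_apply (φ : ℝ ≃o ℝ) (x : unitInterval) : extIso φ x = extFun φ x := rfl

lemma IH_mul_apply (a b : unitInterval ≃o unitInterval) (x : unitInterval) :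
    (a * b) x = a (b x) := rfl

lemma R_mul_apply (a b : ℝ ≃o ℝ) (x : ℝ) : (a * b) x = a (b x) := rfl

noncomputable def E : (ℝ ≃o ℝ) →* (unitInterval ≃o unitInterval) where
  toFun := extIso
  map_one' := by
    apply OrderIso.ext; funext x
    rcases unitInterval_cases x with rfl | rfl | ⟨t, rfl⟩
    · exact extFun_zero 1
    · exact extFun_one 1
    · show extFun 1 (ii t) = ii t
      rw [extFun_ii]; rfl
  map_mul' := fun φ ψ => by
    apply OrderIso.ext; funext x
    show extFun (φ * ψ) x = extFun φ (extFun ψ x)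
    rcases unitInterval_cases x with rfl | rfl | ⟨t, rfl⟩
    · rw [extFun_zero, extFun_zero, extFun_zero]
    · rw [extFun_one, extFun_one, extFun_one]
    · rw [extFun_ii, extFun_ii, extFun_ii]; rfl

lemma E_ii (φ : ℝ ≃o ℝ) (t : ℝ) : E φ (ii t) = ii (φ t) := extFun_ii φ t
lemma E_zero (φ : ℝ ≃o ℝ) : E φ 0 = 0 := extFun_zero φ
lemma E_one (φ : ℝ ≃o ℝ) : E φ (1:unitInterval) = 1 := extFun_one φ

-- the real homeomorphisms
noncomputable def g0 : ℝ ≃o ℝ := OrderIso.addRight (1:ℝ)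

lemma g0_apply (t : ℝ) : g0 t = t + 1 := rfl

noncomputable def f0fun : ℝ → ℝ := fun t => (⌊t⌋ : ℝ) + (Int.fract t)^2

lemma f0fun_strictMono : StrictMono f0fun := by
  intro a b hab
  rcases lt_or_ge (⌊a⌋ : ℤ) ⌊b⌋ with h | h
  · have h1 : f0fun a < (⌊a⌋:ℝ) + 1 := by
      have := Int.fract_lt_one a
      have h0 := Int.fract_nonneg a
      simp only [f0fun]
      nlinarith
    have h2 : ((⌊a⌋:ℝ) + 1) ≤ (⌊b⌋:ℝ) := by exact_mod_cast Int.add_one_le_iff.mpr h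
    have h3 : (⌊b⌋:ℝ) ≤ f0fun b := by
      have := Int.fract_nonneg b
      simp only [f0fun]; nlinarith
    linarith
  · have hfl : ⌊a⌋ = ⌊b⌋ := le_antisymm (Int.floor_le_floor hab.le) h
    have hf : Int.fract a < Int.fract b := by
      simp only [Int.fract]
      rw [hfl]; linarith
    have h0 := Int.fract_nonneg a
    simp only [f0fun, hfl]
    nlinarith

lemma f0fun_surjective : Function.Surjective f0fun := by
  intro s
  refine ⟨(⌊s⌋ : ℝ) + Real.sqrt (Int.fract s), ?_⟩
  have h0 : (0:ℝ) ≤ Real.sqrt (Int.fract s) := Real.sqrt_nonneg _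
  have h1 : Real.sqrt (Int.fract s) < 1 := by
    rw [show (1:ℝ) = Real.sqrt 1 by simp]
    exact Real.sqrt_lt_sqrt (Int.fract_nonneg s) (Int.fract_lt_one s)
  have hfloor : ⌊(⌊s⌋ : ℝ) + Real.sqrt (Int.fract s)⌋ = ⌊s⌋ := by
    rw [Int.floor_intCast_add]
    have : ⌊Real.sqrt (Int.fract s)⌋ = 0 := by
      rw [Int.floor_eq_zero_iff]; exact ⟨h0, h1⟩
    rw [this, add_zero]
  have hfract : Int.fract ((⌊s⌋ : ℝ) + Real.sqrt (Int.fract s)) = Real.sqrt (Int.fract s) := by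
    rw [Int.fract_intCast_add, Int.fract_eq_self.mpr ⟨h0, h1⟩]
  simp only [f0fun, hfloor, hfract]
  rw [Real.sq_sqrt (Int.fract_nonneg s)]
  exact Int.floor_add_fract s

noncomputable def f0 : ℝ ≃o ℝ :=
  StrictMono.orderIsoOfSurjective f0fun f0fun_strictMono f0fun_surjective

lemma f0_apply (t : ℝ) : f0 t = (⌊t⌋ : ℝ) + (Int.fract t)^2 := rfl

lemma f0_int (n : ℤ) : f0 (n : ℝ) = n := by
  simp [f0_apply]

lemma f0_add_one (t : ℝ) : f0 (t + 1) = f0 t + 1 := by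
  simp only [f0_apply]
  rw [Int.floor_add_one, Int.fract_add_one]
  push_cast
  ring

lemma f0_g0_comm : f0 * g0 = g0 * f0 := by
  apply OrderIso.ext; funext t
  rw [R_mul_apply, R_mul_apply, g0_apply, g0_apply, f0_add_one]

-- iterates
lemma zpow_apply_seq (σ : ℝ ≃o ℝ) (a : ℤ → ℝ) (h : ∀ k, σ (a k) = a (k+1)) :
    ∀ (m k : ℤ), (σ^m) (a k) = a (k + m) := by
  have hinv : ∀ k, σ⁻¹ (a k) = a (k - 1) := by
    intro k
    have := h (k-1)
    rw [sub_add_cancel] at this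
    rw [← this, RelIso.inv_apply_self]
  intro m
  induction m using Int.induction_on with
  | zero => intro k; simp [RelIso.coe_one]
  | succ n ih =>
    intro k
    rw [zpow_add_one, R_mul_apply, h, ih (k+1)]
    ring_nf
  | pred n ih =>
    intro k
    rw [zpow_sub_one, R_mul_apply, hinv, ih (k-1)]
    ring_nf

lemma zpow_fix (σ : ℝ ≃o ℝ) (c : ℝ) (h : σ c = c) (m : ℤ) : (σ^m) c = c := by
  have := zpow_apply_seq σ (fun _ => c) (fun _ => h) m 0
  simpa using this

lemma g0_zpow (n : ℤ) (t : ℝ) : (g0^n) t = t + n := by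
  have := zpow_apply_seq g0 (fun k => t + k) (fun k => by simp [g0_apply]; ring) n 0
  simpa using this

-- the doubly-exponential sequence
noncomputable def aseq : ℤ → ℝ := fun m => Real.exp (-Real.exp (m * Real.log 2))

lemma aseq_pos (m : ℤ) : 0 < aseq m := Real.exp_pos _

lemma aseq_lt_one (m : ℤ) : aseq m < 1 := by
  rw [aseq, show (1:ℝ) = Real.exp 0 by simp]
  apply Real.exp_lt_exp.mpr
  simp [Real.exp_pos]

lemma aseq_mem (m : ℤ) : aseq m ∈ Ioo (0:ℝ) 1 := ⟨aseq_pos m, aseq_lt_one m⟩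

lemma aseq_succ (m : ℤ) : aseq (m + 1) = (aseq m)^2 := by
  rw [aseq, aseq, ← Real.exp_nat_mul]
  congr 1
  push_cast
  rw [add_mul, one_mul, Real.exp_add, Real.exp_log (by norm_num : (0:ℝ) < 2)]
  ring

lemma aseq_strictAnti : StrictAnti aseq := by
  intro m n hmn
  rw [aseq, aseq, Real.exp_lt_exp, neg_lt_neg_iff, Real.exp_lt_exp]
  have : (m:ℝ) < n := by exact_mod_cast hmn
  nlinarith [Real.log_pos (by norm_num : (1:ℝ) < 2)]

lemma f0_aseq (m : ℤ) : f0 (aseq m) = aseq (m + 1) := by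
  rw [f0_apply, aseq_succ]
  have h := aseq_mem m
  rw [Int.floor_eq_zero_iff.mpr ⟨h.1.le, h.2⟩, Int.fract_eq_self.mpr ⟨h.1.le, h.2⟩]
  simp

lemma f0_zpow_aseq (m k : ℤ) : (f0^m) (aseq k) = aseq (k + m) :=
  zpow_apply_seq f0 aseq f0_aseq m k

lemma aseq_tendsto_atTop : Tendsto aseq atTop (nhds 0) := by
  have h1 : Tendsto (fun m : ℤ => (m:ℝ) * Real.log 2) atTop atTop := by
    apply Tendsto.atTop_mul_const (Real.log_pos (by norm_num : (1:ℝ) < 2))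
    exact tendsto_intCast_atTop_atTop
  have h2 : Tendsto (fun m : ℤ => -Real.exp ((m:ℝ) * Real.log 2)) atTop atBot :=
    tendsto_neg_atTop_atBot.comp (Real.tendsto_exp_atTop.comp h1)
  exact Real.tendsto_exp_atBot.comp h2

lemma aseq_tendsto_atBot : Tendsto aseq atBot (nhds 1) := by
  have h1 : Tendsto (fun m : ℤ => (m:ℝ) * Real.log 2) atBot atBot := by
    apply Tendsto.atBot_mul_const (Real.log_pos (by norm_num : (1:ℝ) < 2))
    exact tendsto_intCast_atBot_iff.mpr tendsto_id
  have h2 : Tendsto (fun m : ℤ => Real.exp ((m:ℝ) * Real.log 2)) atBot (nhds 0) :=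
    Real.tendsto_exp_atBot.comp h1
  have h3 : Tendsto (fun m : ℤ => -Real.exp ((m:ℝ) * Real.log 2)) atBot (nhds 0) := by
    simpa using h2.neg
  have := (Real.continuous_exp.tendsto 0).comp h3
  rw [Real.exp_zero] at this; exact this

-- accumulation point machinery
lemma accPt_iff_nhdsWithin {X : Type*} [TopologicalSpace X] (x : X) (C : Set X) :
    AccPt x (𝓟 C) ↔ (𝓝[C \ {x}] x).NeBot := by
  unfold AccPt
  rw [nhdsWithin, nhdsWithin, inf_assoc, inf_principal]
  congr! 2
  rw [diff_eq, inter_comm]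

lemma not_accPt_of_finite_ball {C : Set ℝ} {x : ℝ} {ε : ℝ} (hε : 0 < ε)
    (hfin : (C ∩ Metric.ball x ε).Finite) : ¬ AccPt x (𝓟 C) := by
  intro hacc
  have h2 : AccPt x (𝓟 (Metric.ball x ε ∩ C)) :=
    hacc.nhds_inter (Metric.ball_mem_nhds x hε)
  rw [accPt_iff_nhdsWithin] at h2
  have hmem : x ∈ closure ((Metric.ball x ε ∩ C) \ {x}) :=
    mem_closure_iff_nhdsWithin_neBot.mpr h2
  have hfin' : ((Metric.ball x ε ∩ C) \ {x}).Finite := by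
    apply Set.Finite.diff
    exact (inter_comm _ _ ▸ hfin)
  rw [hfin'.isClosed.closure_eq] at hmem
  exact hmem.2 rfl

lemma accPt_ii_image (R : Set ℝ) (t : ℝ) : AccPt (ii t) (𝓟 (ii '' R)) ↔ AccPt t (𝓟 R) := by
  rw [accPt_iff_nhdsWithin, accPt_iff_nhdsWithin]
  have himg : (ii '' R) \ {ii t} = ii '' (R \ {t}) := by
    rw [Set.image_diff ii_injective, Set.image_singleton]
  rw [himg, ← ii_isEmbedding.map_nhdsWithin_eq]
  exact Filter.map_neBot_iff ii

lemma ii_tendsto_atTop : Tendsto ii atTop (nhds (1 : unitInterval)) := by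
  rw [tendsto_subtype_rng]
  simpa [ii_val] using qf_tendsto_atTop

lemma ii_tendsto_atBot : Tendsto ii atBot (nhds (0 : unitInterval)) := by
  rw [tendsto_subtype_rng]
  simpa [ii_val] using qf_tendsto_atBot

lemma accPt_one_of_unbounded {R : Set ℝ} (hA : ¬ BddAbove R) :
    AccPt (1 : unitInterval) (𝓟 (ii '' R)) := by
  rw [accPt_iff_nhds]
  intro U hU
  rw [not_bddAbove_iff] at hA
  have hev : ∀ᶠ t in atTop, ii t ∈ U := ii_tendsto_atTop hU
  obtain ⟨c, hc⟩ := eventually_atTop.mp hev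
  obtain ⟨y, hyR, hcy⟩ := hA c
  exact ⟨ii y, ⟨hc y hcy.le, ⟨y, hyR, rfl⟩⟩, ii_ne_one y⟩

lemma accPt_zero_of_unbounded {R : Set ℝ} (hB : ¬ BddBelow R) :
    AccPt (0 : unitInterval) (𝓟 (ii '' R)) := by
  rw [accPt_iff_nhds]
  intro U hU
  rw [not_bddBelow_iff] at hB
  have hev : ∀ᶠ t in atBot, ii t ∈ U := ii_tendsto_atBot hU
  obtain ⟨c, hc⟩ := eventually_atBot.mp hev
  obtain ⟨y, hyR, hcy⟩ := hB c
  exact ⟨ii y, ⟨hc y hcy.le, ⟨y, hyR, rfl⟩⟩, ii_ne_zero y⟩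

lemma acc_set_image (R L : Set ℝ) (hR : ∀ t, AccPt t (𝓟 R) ↔ t ∈ L)
    (hA : ¬ BddAbove R) (hB : ¬ BddBelow R) :
    {p : unitInterval | AccPt p (𝓟 (ii '' R))} = ii '' L ∪ {0, 1} := by
  ext p
  rcases unitInterval_cases p with rfl | rfl | ⟨t, rfl⟩
  · simp only [mem_setOf_eq, mem_union, mem_insert_iff, mem_singleton_iff]
    exact ⟨fun _ => by tauto, fun _ => accPt_zero_of_unbounded hB⟩
  · simp only [mem_setOf_eq, mem_union, mem_insert_iff, mem_singleton_iff]
    exact ⟨fun _ => by tauto, fun _ => accPt_one_of_unbounded hA⟩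
  · simp only [mem_setOf_eq, mem_union, mem_insert_iff, mem_singleton_iff]
    rw [accPt_ii_image, hR]
    constructor
    · intro h; exact Or.inl ⟨t, h, rfl⟩
    · rintro (⟨s, hs, hst⟩ | h | h)
      · rwa [← ii_injective hst]
      · exact absurd h (ii_ne_zero t)
      · exact absurd h (ii_ne_one t)

-- the real sets
def Zset : Set ℝ := Set.range (fun n : ℤ => (n : ℝ))
def Tset : Set ℝ := {t | ∃ m n : ℤ, aseq m + n = t}

lemma Zset_acc : ∀ t : ℝ, AccPt t (𝓟 Zset) ↔ t ∈ (∅ : Set ℝ) := by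
  intro t
  simp only [mem_empty_iff_false, iff_false]
  apply not_accPt_of_finite_ball (ε := 1/2) (by norm_num)
  apply Set.Subsingleton.finite
  rintro x ⟨⟨m, rfl⟩, hx⟩ y ⟨⟨n, rfl⟩, hy⟩
  rw [Metric.mem_ball, Real.dist_eq] at hx hy
  obtain ⟨h1, h2⟩ := abs_lt.mp hx
  obtain ⟨h3, h4⟩ := abs_lt.mp hy
  have habs : |(m:ℝ) - (n:ℝ)| < 1 := by rw [abs_lt]; constructor <;> linarith
  have hcast : |m - n| < (1:ℤ) := by exact_mod_cast (by push_cast; exact habs : ((|m - n| : ℤ) : ℝ) < 1)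
  obtain ⟨hc1, hc2⟩ := abs_lt.mp hcast
  have : m = n := by omega
  rw [this]

lemma Tset_not_int {m n k : ℤ} : aseq m + (n:ℝ) ≠ (k:ℝ) := by
  intro h
  have h1 : aseq m = ((k - n : ℤ) : ℝ) := by push_cast; linarith
  have h2 := aseq_pos m
  have h3 := aseq_lt_one m
  rw [h1] at h2 h3
  have h2' : 0 < k - n := by exact_mod_cast h2
  have h3' : k - n < 1 := by exact_mod_cast h3
  omega

lemma Tset_acc_int (k : ℤ) : AccPt ((k:ℝ)) (𝓟 Tset) := by
  rw [accPt_iff_nhds]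
  intro U hU
  have htend : Tendsto (fun m : ℤ => aseq m + (k:ℝ)) atTop (nhds (k:ℝ)) := by
    simpa using aseq_tendsto_atTop.add_const (k:ℝ)
  have hev : ∀ᶠ m in atTop, (aseq m + (k:ℝ)) ∈ U := htend hU
  obtain ⟨m, hm⟩ := hev.exists
  refine ⟨aseq m + k, ⟨hm, ⟨m, k, rfl⟩⟩, ?_⟩
  exact Tset_not_int

lemma Tset_not_acc {t : ℝ} (ht : t ∉ Zset) : ¬ AccPt t (𝓟 Tset) := by
  set n : ℤ := ⌊t⌋ with hn
  have htn : (n:ℝ) < t := by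
    rcases eq_or_lt_of_le (Int.floor_le t) with h | h
    · exact absurd ⟨n, h⟩ ht
    · exact h
  have htn1 : t < (n:ℝ) + 1 := Int.lt_floor_add_one t
  set s : ℝ := t - n with hs
  have hs0 : 0 < s := by simp [hs]; linarith
  have hs1 : s < 1 := by simp [hs]; linarith
  have hM' : ∀ᶠ m in atTop, aseq m < s/2 :=
    aseq_tendsto_atTop.eventually_lt_const (by linarith)
  have hN' : ∀ᶠ m in atBot, (s+1)/2 < aseq m :=
    aseq_tendsto_atBot.eventually_const_lt (by linarith)
  obtain ⟨M, hM⟩ := eventually_atTop.mp hM'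
  obtain ⟨N, hN⟩ := eventually_atBot.mp hN'
  set ε : ℝ := min (min (s/2) ((1-s)/2)) (min (t - n) ((n:ℝ) + 1 - t)) with hε
  have hεpos : 0 < ε := by
    apply lt_min (lt_min (by linarith) (by linarith)) (lt_min (by linarith) (by linarith))
  apply not_accPt_of_finite_ball hεpos
  have hsub : Tset ∩ Metric.ball t ε ⊆ (fun m : ℤ => aseq m + (n:ℝ)) '' (Set.Icc N M) := by
    rintro y ⟨⟨m, n', rfl⟩, hy⟩
    rw [Metric.mem_ball, Real.dist_eq] at hy
    obtain ⟨hy1, hy2⟩ := abs_lt.mp hy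
    have hε1 : ε ≤ t - n := le_trans (min_le_right _ _) (min_le_left _ _)
    have hε2 : ε ≤ (n:ℝ) + 1 - t := le_trans (min_le_right _ _) (min_le_right _ _)
    have hε3 : ε ≤ s/2 := le_trans (min_le_left _ _) (min_le_left _ _)
    have hε4 : ε ≤ (1-s)/2 := le_trans (min_le_left _ _) (min_le_right _ _)
    have ham0 := aseq_pos m
    have ham1 := aseq_lt_one m
    -- n' = n
    have hnn' : n' = n := by
      have hlow : (n:ℝ) < (n':ℝ) + aseq m := by linarith
      have hhigh : (n':ℝ) + aseq m < (n:ℝ) + 1 := by linarith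
      have l1 : (n:ℝ) - 1 < (n':ℝ) := by linarith
      have l2 : (n':ℝ) < (n:ℝ) + 1 := by linarith
      have l1' : n - 1 < n' := by exact_mod_cast l1
      have l2' : n' < n + 1 := by exact_mod_cast l2
      omega
    subst hnn'
    refine ⟨m, ?_, rfl⟩
    constructor
    · by_contra hc
      push_neg at hc
      have := hN m (by omega)
      have : aseq m < s + ε := by linarith
      linarith [hN m (by omega : m ≤ N)]
    · by_contra hc
      push_neg at hc
      have := hM m (by omega : M ≤ m)
      have : s - ε < aseq m := by linarith
      linarith
  exact Set.Finite.subset (Set.Finite.image _ (Set.finite_Icc N M)) hsub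

lemma Tset_acc : ∀ t : ℝ, AccPt t (𝓟 Tset) ↔ t ∈ Zset := by
  intro t
  constructor
  · intro h
    by_contra hc
    exact Tset_not_acc hc h
  · rintro ⟨k, rfl⟩
    exact Tset_acc_int k

lemma Zset_unbdd_above : ¬ BddAbove Zset := by
  rw [not_bddAbove_iff]
  intro c
  obtain ⟨n, hn⟩ := exists_int_gt c
  exact ⟨n, ⟨n, rfl⟩, hn⟩

lemma Zset_unbdd_below : ¬ BddBelow Zset := by
  rw [not_bddBelow_iff]
  intro c
  obtain ⟨n, hn⟩ := exists_int_lt c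
  exact ⟨n, ⟨n, rfl⟩, hn⟩

lemma Tset_unbdd_above : ¬ BddAbove Tset := by
  rw [not_bddAbove_iff]
  intro c
  obtain ⟨n, hn⟩ := exists_int_gt c
  refine ⟨aseq 0 + n, ⟨0, n, rfl⟩, ?_⟩
  have := aseq_pos 0
  linarith

lemma Tset_unbdd_below : ¬ BddBelow Tset := by
  rw [not_bddBelow_iff]
  intro c
  obtain ⟨n, hn⟩ := exists_int_lt (c - 1)
  refine ⟨aseq 0 + n, ⟨0, n, rfl⟩, ?_⟩
  have := aseq_lt_one 0
  linarith

noncomputable def Ff : unitInterval ≃o unitInterval := E f0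
noncomputable def Gg : unitInterval ≃o unitInterval := E g0

lemma Ff_Gg_comm : Ff * Gg = Gg * Ff := by
  rw [Ff, Gg, ← map_mul, ← map_mul, f0_g0_comm]

lemma mem_closure_FfGg (h : unitInterval ≃o unitInterval) :
    h ∈ Subgroup.closure {Ff, Gg} ↔ ∃ m n : ℤ, Ff^m * Gg^n = h := by
  have hcomm : Commute Ff Gg := Ff_Gg_comm
  have hcz : ∀ m n : ℤ, Commute (Ff^m) (Gg^n) := fun m n => hcomm.zpow_zpow m n
  constructor
  · intro hmem
    refine Subgroup.closure_induction ?_ ?_ ?_ ?_ hmem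
    · rintro x (rfl | rfl)
      · exact ⟨1, 0, by simp⟩
      · exact ⟨0, 1, by simp⟩
    · exact ⟨0, 0, by simp⟩
    · rintro x y _ _ ⟨m, n, rfl⟩ ⟨m', n', rfl⟩
      refine ⟨m + m', n + n', ?_⟩
      rw [zpow_add, zpow_add]
      calc Ff^m * Ff^m' * (Gg^n * Gg^n')
          = Ff^m * (Ff^m' * Gg^n) * Gg^n' := by group
        _ = Ff^m * (Gg^n * Ff^m') * Gg^n' := by rw [(hcz m' n).eq]
        _ = Ff^m * Gg^n * (Ff^m' * Gg^n') := by group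
    · rintro x _ ⟨m, n, rfl⟩
      refine ⟨-m, -n, ?_⟩
      rw [mul_inv_rev, ← zpow_neg, ← zpow_neg]
      exact (hcz (-m) (-n)).eq
  · rintro ⟨m, n, rfl⟩
    exact mul_mem (zpow_mem (Subgroup.subset_closure (by simp)) m)
      (zpow_mem (Subgroup.subset_closure (by simp)) n)

lemma FfGg_apply (m n : ℤ) (t : ℝ) :
    (Ff^m * Gg^n) (ii t) = ii ((f0^m) ((g0^n) t)) := by
  have : Ff^m * Gg^n = E (f0^m * g0^n) := by
    rw [map_mul, map_zpow, map_zpow]; rfl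
  rw [this, E_ii]
  rfl

lemma orbit_z (G : Subgroup IntervalHomeo) (hG : G = Subgroup.closure {Ff, Gg}) :
    orbit G (ii 0) = ii '' Zset := by
  ext y
  constructor
  · rintro ⟨h, hmem, rfl⟩
    rw [hG, mem_closure_FfGg] at hmem
    obtain ⟨m, n, rfl⟩ := hmem
    rw [FfGg_apply]
    have heq : (f0^m) ((g0^n) 0) = ((n:ℤ):ℝ) := by
      rw [g0_zpow, zero_add]
      exact zpow_fix f0 (n:ℝ) (f0_int n) m
    exact ⟨(n:ℝ), ⟨n, rfl⟩, by rw [heq]⟩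
  · rintro ⟨s, ⟨k, rfl⟩, rfl⟩
    refine ⟨Gg^k, by rw [hG, mem_closure_FfGg]; exact ⟨0, k, by simp⟩, ?_⟩
    have h1 : Gg ^ k = Ff ^ (0:ℤ) * Gg ^ k := by simp
    have h2 := congrArg (fun h : unitInterval ≃o unitInterval => h (ii 0)) h1
    rw [h2, FfGg_apply, g0_zpow, zpow_zero]
    simp [RelIso.coe_one]

lemma gpow_orbit_z : {y | ∃ n : ℤ, (Gg ^ n) (ii 0) = y} = ii '' Zset := by
  ext y
  constructor
  · rintro ⟨n, rfl⟩
    have h1 : Gg ^ n = Ff ^ (0:ℤ) * Gg ^ n := by simp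
    have h2 := congrArg (fun h : unitInterval ≃o unitInterval => h (ii 0)) h1
    rw [h2, FfGg_apply, g0_zpow, zpow_zero]
    exact ⟨(n:ℝ), ⟨n, rfl⟩, by simp [RelIso.coe_one]⟩
  · rintro ⟨s, ⟨k, rfl⟩, rfl⟩
    refine ⟨k, ?_⟩
    have h1 : Gg ^ k = Ff ^ (0:ℤ) * Gg ^ k := by simp
    have h2 := congrArg (fun h : unitInterval ≃o unitInterval => h (ii 0)) h1
    rw [h2, FfGg_apply, g0_zpow, zpow_zero]
    simp [RelIso.coe_one]

lemma orbit_x (G : Subgroup IntervalHomeo) (hG : G = Subgroup.closure {Ff, Gg}) :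
    orbit G (ii (aseq 0)) = ii '' Tset := by
  have key : ∀ m n : ℤ, (f0^m) ((g0^n) (aseq 0)) = aseq m + n := by
    intro m n
    have hc : Commute f0 g0 := f0_g0_comm
    have hcz := (hc.zpow_zpow m n).eq
    have h2 := congrArg (fun h : ℝ ≃o ℝ => h (aseq 0)) hcz
    simp only [R_mul_apply] at h2
    rw [h2, f0_zpow_aseq, zero_add, g0_zpow]
  ext y
  constructor
  · rintro ⟨h, hmem, rfl⟩
    rw [hG, mem_closure_FfGg] at hmem
    obtain ⟨m, n, rfl⟩ := hmem
    rw [FfGg_apply, key]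
    exact ⟨aseq m + n, ⟨m, n, rfl⟩, rfl⟩
  · rintro ⟨s, ⟨m, n, rfl⟩, rfl⟩
    refine ⟨Ff^m * Gg^n, by rw [hG, mem_closure_FfGg]; exact ⟨m, n, rfl⟩, ?_⟩
    rw [FfGg_apply, key]

end Aux

/-- There are commuting orientation-preserving homeomorphisms `f`, `g` of
`[0,1]` and points `z, x ∈ (0,1)` such that, for the group `G` generated by `f` and `g`:
(i) the orbit of `z` is `{gⁿ(z) : n ∈ ℤ}` and its accumulation set is exactly `{0,1}`;
(ii) the orbit of `x` is disjoint from that of `z` and its accumulation set is exactly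
`O(z) ∪ {0,1}`. -/
theorem stmt9 : ∃ f g : IntervalHomeo, f * g = g * f ∧ ∃ z x : unitInterval,
    z ∈ openI ∧ x ∈ openI ∧
    ∀ G : Subgroup IntervalHomeo, G = Subgroup.closure {f, g} →
      orbit G z = {y | ∃ n : ℤ, (g ^ n) z = y} ∧
      {p | AccPt p (𝓟 (orbit G z))} = {0, 1} ∧
      Disjoint (orbit G x) (orbit G z) ∧
      {p | AccPt p (𝓟 (orbit G x))} = orbit G z ∪ {0, 1} := by
  refine ⟨Ff, Gg, Ff_Gg_comm, ii 0, ii (aseq 0), qf_mem 0, qf_mem (aseq 0), ?_⟩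
  intro G hG
  refine ⟨?_, ?_, ?_, ?_⟩
  · rw [orbit_z G hG, gpow_orbit_z]
  · rw [orbit_z G hG, acc_set_image Zset ∅ Zset_acc Zset_unbdd_above Zset_unbdd_below]
    simp
  · rw [orbit_x G hG, orbit_z G hG, Set.disjoint_left]
    rintro a ⟨s, ⟨m, n, rfl⟩, rfl⟩ ⟨s', ⟨k, rfl⟩, heq⟩
    exact Tset_not_int (ii_injective heq.symm)
  · rw [orbit_x G hG, orbit_z G hG,
      acc_set_image Tset Zset Tset_acc Tset_unbdd_above Tset_unbdd_below]
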